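/- Let ℳ be a finite family of paracontractions ℝⁿ → ℝⁿ (with respect to a fixed norm) with ⋂_{M∈ℳ} fix(M) ≠ ∅. Consider the iteration x(k+1) = M_k(x(k)) with each M_k ∈ ℳ. Then x(k) converges to a point that is a common fixed point of all operators occurring infinitely often in the sequence (M_k). -/

import Mathlib

open Filter

/-- Elsner–Koltracht–Neumann: for a finite family of
paracontractions with a common fixed point, any iteration x(k+1) = M_{σ(k)}(x(k))
converges to a common fixed point of all operators occurring infinitely often. -/
theorem elsner_koltracht_neumann {n m : ℕ}
    (M : Fin m → (EuclideanSpace ℝ (Fin n) → EuclideanSpace ℝ (Fin n)))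
    (hMc : ∀ i, Continuous (M i))
    (hM : ∀ i, ∀ x y, M i y = y → M i x ≠ x → ‖M i x - y‖ < ‖x - y‖)
    (hfix : ∃ z, ∀ i, M i z = z)
    (σ : ℕ → Fin m) (x : ℕ → EuclideanSpace ℝ (Fin n))
    (hiter : ∀ k, x (k + 1) = M (σ k) (x k)) :
    ∃ xstar, Tendsto x atTop (nhds xstar) ∧
      ∀ i : Fin m, (∃ᶠ k in atTop, σ k = i) → M i xstar = xstar := by
  classical
  obtain ⟨z, hz⟩ := hfix
  -- one-step non-expansiveness toward any fixed point
  have hstep : ∀ (i : Fin m) (w v : EuclideanSpace ℝ (Fin n)), M i v = v →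
      ‖M i w - v‖ ≤ ‖w - v‖ := by
    intro i w v hv
    by_cases h : M i w = w
    · rw [h]
    · exact (hM i w v hv h).le
  set r : ℕ → ℝ := fun k => ‖x k - z‖ with hrdef
  have hranti : Antitone r := by
    apply antitone_nat_of_succ_le
    intro k
    show ‖x (k + 1) - z‖ ≤ ‖x k - z‖
    rw [hiter k]
    exact hstep (σ k) (x k) z (hz (σ k))
  have hrbdd : BddBelow (Set.range r) := ⟨0, by rintro _ ⟨k, rfl⟩; exact norm_nonneg _⟩
  set d : ℝ := ⨅ k, r k with hddef
  have hd : Tendsto r atTop (nhds d) := tendsto_atTop_ciInf hranti hrbdd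
  -- boundedness and an accumulation point
  have hball : ∀ k, x k ∈ Metric.closedBall z (r 0) := by
    intro k
    rw [Metric.mem_closedBall, dist_eq_norm]
    exact hranti (Nat.zero_le k)
  obtain ⟨y, -, φ, hφmono, hφtend⟩ :=
    (isCompact_closedBall z (r 0)).tendsto_subseq hball
  -- key lemma: limits along constant-operator subsequences are fixed
  have key : ∀ (i : Fin m) (w : EuclideanSpace ℝ (Fin n)) (ψ : ℕ → ℕ),
      StrictMono ψ → (∀ j, σ (ψ j) = i) → Tendsto (x ∘ ψ) atTop (nhds w) →
      M i w = w := by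
    intro i w ψ hψ hσψ hw
    have hnorm : Continuous fun u : EuclideanSpace ℝ (Fin n) => ‖u - z‖ :=
      continuous_norm.comp (continuous_id.sub continuous_const)
    have hwz : ‖w - z‖ = d := by
      have h1 : Tendsto (fun j => r (ψ j)) atTop (nhds d) :=
        hd.comp hψ.tendsto_atTop
      have h2 : Tendsto (fun j => ‖x (ψ j) - z‖) atTop (nhds ‖w - z‖) :=
        (hnorm.tendsto w).comp hw
      exact tendsto_nhds_unique h2 h1
    have hMwz : ‖M i w - z‖ = d := by
      have h1 : Tendsto (fun j => x (ψ j + 1)) atTop (nhds (M i w)) := by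
        have h0 : Tendsto (fun j => M i (x (ψ j))) atTop (nhds (M i w)) :=
          ((hMc i).tendsto w).comp hw
        refine h0.congr fun j => ?_
        rw [hiter (ψ j), hσψ j]
      have h2 : Tendsto (fun j => ‖x (ψ j + 1) - z‖) atTop (nhds ‖M i w - z‖) :=
        (hnorm.tendsto (M i w)).comp h1
      have h3 : Tendsto (fun j => r (ψ j + 1)) atTop (nhds d) := by
        refine hd.comp (tendsto_atTop_atTop.2 fun b => ⟨b, fun j hj => ?_⟩)
        exact le_trans (le_trans hj (hψ.id_le j)) (Nat.le_succ _)
      exact tendsto_nhds_unique h2 h3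
    by_contra h
    have := hM i w z (hz i) h
    rw [hwz, hMwz] at this
    exact lt_irrefl d this
  -- dichotomy for each operator
  have dich : ∀ i : Fin m, ∃ δ > (0 : ℝ),
      ∀ᶠ k in atTop, σ k = i ∧ ‖x k - y‖ < δ → M i y = y := by
    intro i
    by_cases hi : M i y = y
    · exact ⟨1, one_pos, Eventually.of_forall fun k _ => hi⟩
    by_contra hcon
    push_neg at hcon
    have hfreq : ∀ j : ℕ, ∃ᶠ k in atTop,
        σ k = i ∧ ‖x k - y‖ < 1 / (j + 1) := by
      intro j
      have hpos : (0 : ℝ) < 1 / (j + 1) := by positivity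
      have h := hcon (1 / (j + 1)) hpos
      exact h.mono fun k hk => hk.1
    obtain ⟨ψ, hψmono, hψ⟩ := extraction_forall_of_frequently hfreq
    have hσψ : ∀ j, σ (ψ j) = i := fun j => (hψ j).1
    have htend : Tendsto (x ∘ ψ) atTop (nhds y) := by
      rw [tendsto_iff_norm_sub_tendsto_zero]
      have hub : Tendsto (fun j : ℕ => 1 / ((j : ℝ) + 1)) atTop (nhds 0) :=
        tendsto_one_div_add_atTop_nhds_zero_nat
      exact squeeze_zero (fun j => norm_nonneg _) (fun j => (hψ j).2.le) hub
    exact hi (key i y ψ hψmono hσψ htend)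
  choose δ hδpos hδev using dich
  have hnem : Nonempty (Fin m) := ⟨σ 0⟩
  set δ₀ : ℝ := Finset.univ.inf' Finset.univ_nonempty δ with hδ₀def
  have hδ₀pos : 0 < δ₀ := by
    rw [hδ₀def, Finset.lt_inf'_iff]
    exact fun i _ => hδpos i
  have hδ₀le : ∀ i, δ₀ ≤ δ i := fun i => Finset.inf'_le δ (Finset.mem_univ i)
  have hgood : ∀ᶠ k in atTop, ‖x k - y‖ < δ₀ → M (σ k) y = y := by
    have hall : ∀ᶠ k in atTop, ∀ i : Fin m,
        σ k = i ∧ ‖x k - y‖ < δ i → M i y = y := eventually_all.2 hδev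
    refine hall.mono fun k hk hlt => ?_
    exact hk (σ k) ⟨rfl, lt_of_lt_of_le hlt (hδ₀le (σ k))⟩
  obtain ⟨K, hK⟩ := eventually_atTop.1 hgood
  -- we can find subsequence points arbitrarily far out and arbitrarily close to y
  have hclose : ∀ ε > (0 : ℝ), ∀ B : ℕ, ∃ j, B ≤ φ j ∧ ‖x (φ j) - y‖ < ε := by
    intro ε hε B
    have h1 : ∀ᶠ j in atTop, ‖x (φ j) - y‖ < ε := by
      have h := (tendsto_iff_norm_sub_tendsto_zero.1 hφtend).eventually
        (eventually_lt_nhds hε)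
      exact h.mono fun j hj => hj
    have h2 : ∀ᶠ j in atTop, B ≤ φ j :=
      eventually_atTop.2 ⟨B, fun j hj => le_trans hj (hφmono.id_le j)⟩
    exact (h2.and h1).exists
  obtain ⟨j₀, hj₀K, hj₀close⟩ := hclose δ₀ hδ₀pos K
  set N : ℕ := φ j₀ with hNdef
  set s : ℕ → ℝ := fun j => ‖x (N + j) - y‖ with hsdef
  -- s stays below δ₀ and is antitone
  have hsind : ∀ j, s j < δ₀ ∧ s (j + 1) ≤ s j := by
    intro j
    induction j with
    | zero =>
      have h0 : s 0 < δ₀ := by simpa [hsdef] using hj₀close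
      refine ⟨h0, ?_⟩
      have hfix' : M (σ (N + 0)) y = y := hK (N + 0) (by omega) h0
      show ‖x (N + 0 + 1) - y‖ ≤ ‖x (N + 0) - y‖
      rw [hiter (N + 0)]
      exact hstep _ _ _ hfix'
    | succ j ih =>
      have h0 : s (j + 1) < δ₀ := lt_of_le_of_lt ih.2 ih.1
      refine ⟨h0, ?_⟩
      have hfix' : M (σ (N + (j + 1))) y = y := hK (N + (j + 1)) (by omega) h0
      show ‖x (N + (j + 1) + 1) - y‖ ≤ ‖x (N + (j + 1)) - y‖
      rw [hiter (N + (j + 1))]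
      exact hstep _ _ _ hfix'
  have hsanti : Antitone s := antitone_nat_of_succ_le fun j => (hsind j).2
  have hsbdd : BddBelow (Set.range s) :=
    ⟨0, by rintro _ ⟨j, rfl⟩; exact norm_nonneg _⟩
  set L : ℝ := ⨅ j, s j with hLdef
  have hsL : Tendsto s atTop (nhds L) := tendsto_atTop_ciInf hsanti hsbdd
  have hLnonneg : (0 : ℝ) ≤ L := le_ciInf fun j => norm_nonneg _
  have hLle : ∀ ε > (0 : ℝ), L ≤ ε := by
    intro ε hε
    obtain ⟨j, hjN, hjclose⟩ := hclose ε hε N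
    have h1 : L ≤ s (φ j - N) := ciInf_le hsbdd _
    have hNj : N + (φ j - N) = φ j := by omega
    have heq : s (φ j - N) = ‖x (φ j) - y‖ := by
      simp only [hsdef, hNj]
    rw [heq] at h1
    exact h1.trans hjclose.le
  have hL0 : L = 0 := by
    by_contra h
    have hLpos : 0 < L := lt_of_le_of_ne hLnonneg (Ne.symm h)
    have := hLle (L / 2) (by linarith)
    linarith
  rw [hL0] at hsL
  have hxy : Tendsto x atTop (nhds y) := by
    rw [tendsto_iff_norm_sub_tendsto_zero]
    have : Tendsto (fun j => ‖x (j + N) - y‖) atTop (nhds 0) := by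
      refine hsL.congr fun j => ?_
      simp only [hsdef, Nat.add_comm N j]
    exact (tendsto_add_atTop_iff_nat N).1 this
  refine ⟨y, hxy, fun i hi => ?_⟩
  obtain ⟨ψ, hψmono, hψ⟩ := extraction_of_frequently_atTop hi
  exact key i y ψ hψmono hψ (hxy.comp hψmono.tendsto_atTop)
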